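/- Let C be a self-homothetic attractor as in the context, with system of balls S_I := f_{i₁} ∘ ⋯ ∘ f_{i_k}(B[0,1]). Then {S_I} is (2·max_i λ_i + h_∅)-uniformly dense, where h_∅ := max_{x ∈ B[0,1]} dist(x, C): for every word I and every closed ball B ⊆ S_I with rad(B) ≥ (2·max_i λ_i + h_∅) · rad(S_I), there is a child S_{I,i} ⊆ B. -/

import Mathlib

open Metric Set
open scoped ENNReal

/-- Composition `f_{i₁} ∘ ⋯ ∘ f_{i_k}` of the maps of an IFS along the word `I`. -/
def wordMap {E : Type*} {K : Type*} (f : K → E → E) (I : List K) : E → E :=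
  (I.map f).foldl (· ∘ ·) id

private lemma foldl_comp_aux {α : Type*} (L : List (α → α)) (g : α → α) :
    L.foldl (· ∘ ·) g = g ∘ L.foldl (· ∘ ·) id := by
  induction L generalizing g with
  | nil => rfl
  | cons a l ih =>
    simp only [List.foldl_cons]
    rw [ih (g ∘ a), ih (id ∘ a)]
    rfl

private lemma wordMap_cons {E K : Type*} (f : K → E → E) (i : K) (I : List K) :
    wordMap f (i :: I) = f i ∘ wordMap f I := by
  simp only [wordMap, List.map_cons, List.foldl_cons]
  rw [foldl_comp_aux]
  rfl

private lemma wordMap_append_singleton {E K : Type*} (f : K → E → E) (I : List K) (i : K) :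
    wordMap f (I ++ [i]) = wordMap f I ∘ f i := by
  simp [wordMap, List.foldl_append]

private lemma wordMap_affine {E : Type*} [NormedAddCommGroup E] [NormedSpace ℝ E] {m : ℕ}
    (lam : Fin m → ℝ) (t : Fin m → E) (I : List (Fin m)) (z : E) :
    wordMap (fun i x => lam i • x + t i) I z
      = (I.map lam).prod • z + wordMap (fun i x => lam i • x + t i) I 0 := by
  induction I with
  | nil => simp [wordMap]
  | cons i I ih =>
    rw [wordMap_cons]
    simp only [Function.comp_apply, ih, List.map_cons, List.prod_cons]
    rw [smul_add, smul_smul]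
    abel

private lemma affine_image_closedBall {E : Type*} [NormedAddCommGroup E] [NormedSpace ℝ E]
    (P : ℝ) (hP : 0 < P) (c y : E) (r : ℝ) :
    (fun z => P • z + c) '' closedBall y r = closedBall (P • y + c) (P * r) := by
  have hdist : ∀ a b : E, dist (P • a + c) (P • b + c) = P * dist a b := fun a b => by
    rw [dist_eq_norm, dist_eq_norm, show P • a + c - (P • b + c) = P • (a - b) by module,
      norm_smul, Real.norm_of_nonneg hP.le]
  ext z
  constructor
  · rintro ⟨a, ha, rfl⟩
    rw [mem_closedBall] at *
    rw [hdist]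
    exact mul_le_mul_of_nonneg_left ha hP.le
  · intro hz
    rw [mem_closedBall] at hz
    refine ⟨y + P⁻¹ • (z - (P • y + c)), ?_, ?_⟩
    · rw [mem_closedBall, dist_eq_norm, show y + P⁻¹ • (z - (P • y + c)) - y
        = P⁻¹ • (z - (P • y + c)) by abel, norm_smul,
        Real.norm_of_nonneg (by positivity), ← dist_eq_norm]
      rw [inv_mul_le_iff₀ hP]
      exact hz
    · show P • (y + P⁻¹ • (z - (P • y + c))) + c = z
      rw [smul_add, smul_smul, mul_inv_cancel₀ hP.ne', one_smul]
      abel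

/-- For a self-homothetic attractor `C` with system of balls
`S_I = f_{i₁} ∘ ⋯ ∘ f_{i_k}(B[0,1])` (so `rad S_I = λ_I`), the system is
`(2·max_i λ_i + h_∅)`-uniformly dense: every closed ball `B ⊆ S_I` with
`rad B ≥ (2·max_i λ_i + h_∅)·rad S_I` contains a child `S_{I,i}`. -/
theorem uniformly_dense_ifs {E : Type*} [NormedAddCommGroup E] [NormedSpace ℝ E]
    [FiniteDimensional ℝ E]
    (m : ℕ) (hm : 0 < m) (lam : Fin m → ℝ) (t : Fin m → E)
    (hlam : ∀ i, lam i ∈ Set.Ioo (0 : ℝ) 1)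
    (hsub : ∀ i, closedBall (t i) (lam i) ⊆ closedBall (0 : E) 1)
    (C : Set E) (hCc : IsCompact C) (hCne : C.Nonempty)
    (hC : C = ⋃ i, (fun x => lam i • x + t i) '' C)
    (I : List (Fin m)) (x : E) (ρ : ℝ)
    (hball : closedBall x ρ ⊆ wordMap (fun i x => lam i • x + t i) I '' closedBall (0 : E) 1)
    (hρ : (2 * (⨆ i, lam i) + (⨆ y ∈ closedBall (0 : E) 1, infDist y C)) * (I.map lam).prod
      ≤ ρ) :
    ∃ i : Fin m,
      wordMap (fun i x => lam i • x + t i) (I ++ [i]) '' closedBall (0 : E) 1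
        ⊆ closedBall x ρ := by
  have : Nonempty (Fin m) := ⟨⟨0, hm⟩⟩
  set f : Fin m → E → E := fun i x => lam i • x + t i with hfdef
  set P : ℝ := (I.map lam).prod with hPdef
  have hPpos : 0 < P := List.prod_pos (by
    intro a ha
    obtain ⟨i, _, rfl⟩ := List.mem_map.mp ha
    exact (hlam i).1)
  set lmax : ℝ := ⨆ i, lam i with hlmaxdef
  have hlmax : ∀ i, lam i ≤ lmax := fun i => le_ciSup (Finite.bddAbove_range _) i
  have hlmaxpos : 0 < lmax := lt_of_lt_of_le (hlam ⟨0, hm⟩).1 (hlmax _)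
  set h : ℝ := ⨆ y ∈ closedBall (0 : E) 1, infDist y C with hhdef
  -- C is contained in the unit ball
  have hfi_ball : ∀ i, f i '' closedBall (0 : E) 1 = closedBall (t i) (lam i) := by
    intro i
    have := affine_image_closedBall (lam i) (hlam i).1 (t i) 0 1
    simpa using this
  have hCsub : C ⊆ closedBall (0 : E) 1 := by
    set B : Set E := closedBall (0 : E) 1 with hBdef
    have hBne : B.Nonempty := ⟨0, mem_closedBall_self zero_le_one⟩
    obtain ⟨y₀, hy₀C, hy₀max⟩ := hCc.exists_isMaxOn hCne (continuous_infDist_pt B).continuousOn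
    have hy0 : infDist y₀ B ≤ 0 := by
      have : y₀ ∈ ⋃ i, f i '' C := hC ▸ hy₀C
      simp only [mem_iUnion, mem_image] at this
      obtain ⟨i, z, hzC, hzeq⟩ := this
      obtain ⟨b, hbB, hbd⟩ := (isCompact_closedBall (0 : E) 1).exists_infDist_eq_dist hBne z
      have hfb : f i b ∈ B := hsub i (by
        rw [← hfi_ball i]; exact mem_image_of_mem _ hbB)
      have hd : dist y₀ (f i b) = lam i * dist z b := by
        rw [← hzeq, hfdef]
        simp only
        rw [dist_eq_norm, show lam i • z + t i - (lam i • b + t i) = lam i • (z - b) by module,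
          norm_smul, Real.norm_of_nonneg (hlam i).1.le, ← dist_eq_norm]
      have h1 : infDist y₀ B ≤ lam i * infDist z B := by
        calc infDist y₀ B ≤ dist y₀ (f i b) := infDist_le_dist_of_mem hfb
          _ = lam i * dist z b := hd
          _ = lam i * infDist z B := by rw [hbd]
      have h2 : infDist z B ≤ infDist y₀ B := hy₀max hzC
      nlinarith [infDist_nonneg (x := y₀) (s := B), (hlam i).2, (hlam i).1]
    intro c hc
    have : infDist c B ≤ 0 := le_trans (hy₀max hc) hy0
    have h0 : infDist c B = 0 := le_antisymm this infDist_nonneg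
    exact ((isClosed_closedBall (x := (0:E)) (ε := 1)).mem_iff_infDist_zero hBne).mpr h0
  -- bounds for h
  have hhge : ∀ y ∈ closedBall (0 : E) 1, infDist y C ≤ h := by
    intro y hy
    obtain ⟨c0, hc0⟩ := hCne
    have hbdd : BddAbove (range fun y => ⨆ _ : y ∈ closedBall (0 : E) 1, infDist y C) := by
      refine ⟨2, ?_⟩
      rintro _ ⟨z, rfl⟩
      show (⨆ _ : z ∈ closedBall (0 : E) 1, infDist z C) ≤ 2
      by_cases hz : z ∈ closedBall (0 : E) 1
      · rw [ciSup_pos hz]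
        calc infDist z C ≤ dist z c0 := infDist_le_dist_of_mem hc0
          _ ≤ ‖z‖ + ‖c0‖ := by
              rw [dist_eq_norm]; exact norm_sub_le _ _
          _ ≤ 1 + 1 := by
              gcongr
              · simpa [mem_closedBall, dist_zero_right] using hz
              · simpa [mem_closedBall, dist_zero_right] using hCsub hc0
          _ = 2 := by norm_num
      · have hemp : IsEmpty (z ∈ closedBall (0 : E) 1) := ⟨hz⟩
        rw [Real.iSup_of_isEmpty (fun _ => infDist z C)]
        norm_num
    calc infDist y C = ⨆ _ : y ∈ closedBall (0 : E) 1, infDist y C :=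
          (ciSup_pos (f := fun _ : y ∈ closedBall (0 : E) 1 => infDist y C) hy).symm
      _ ≤ h := le_ciSup hbdd y
  have hh0 : 0 ≤ h := le_trans infDist_nonneg (hhge 0 (mem_closedBall_self zero_le_one))
  -- get preimage center x'
  have hρpos : 0 < ρ := lt_of_lt_of_le (by positivity) hρ
  obtain ⟨x', hx', hgx'⟩ := hball (mem_closedBall_self hρpos.le)
  -- nearest point of C to x'
  obtain ⟨c, hcC, hcd⟩ := hCc.exists_infDist_eq_dist hCne x'
  have hch : dist x' c ≤ h := by rw [← hcd]; exact hhge x' hx'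
  -- c belongs to some f i '' C
  have hcU : c ∈ ⋃ i, f i '' C := hC ▸ hcC
  simp only [mem_iUnion, mem_image] at hcU
  obtain ⟨i, z, hzC, hzeq⟩ := hcU
  refine ⟨i, ?_⟩
  rw [wordMap_append_singleton, Set.image_comp]
  have hg_eq : wordMap f I = fun z => P • z + wordMap f I 0 :=
    funext fun z => wordMap_affine lam t I z
  -- step: f i '' B[0,1] ⊆ B[x', ρ/P]
  have hstep : f i '' closedBall (0 : E) 1 ⊆ closedBall x' (ρ / P) := by
    rw [hfi_ball i]
    intro w hw
    rw [mem_closedBall] at hw ⊢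
    have hct : dist c (t i) ≤ lam i := by
      rw [← hzeq, hfdef]
      simp only
      rw [dist_eq_norm, show lam i • z + t i - t i = lam i • z by abel, norm_smul,
        Real.norm_of_nonneg (hlam i).1.le]
      have : ‖z‖ ≤ 1 := by simpa [mem_closedBall, dist_zero_right] using hCsub hzC
      nlinarith [(hlam i).1]
    have h1 : dist w x' ≤ 2 * lam i + h := by
      calc dist w x' ≤ dist w (t i) + dist (t i) c + dist c x' := dist_triangle4 _ _ _ _
        _ ≤ lam i + lam i + h := by
            gcongr
            · rw [dist_comm]; exact hct
            · rw [dist_comm]; exact hch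
        _ = 2 * lam i + h := by ring
    refine h1.trans ?_
    rw [le_div_iff₀ hPpos]
    calc (2 * lam i + h) * P ≤ (2 * lmax + h) * P := by
          have : lam i ≤ lmax := hlmax i
          nlinarith
      _ ≤ ρ := hρ
  calc wordMap f I '' (f i '' closedBall (0 : E) 1)
      ⊆ wordMap f I '' closedBall x' (ρ / P) := image_mono hstep
    _ = closedBall (wordMap f I x') (P * (ρ / P)) := by
        rw [hg_eq]; exact affine_image_closedBall P hPpos _ x' (ρ / P)
    _ = closedBall x ρ := by rw [hgx', mul_div_cancel₀ _ hPpos.ne']
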